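/- arXiv:1710.04325 — 8 statements merged into one kernel-verified Lean document; each statement's English description precedes it below -/
import Mathlib

section
/- Let P and Q be nonempty finite sets in ℝ^d and K a positive definite kernel with feature map φ into a Hilbert space H, so K(x,y) = ⟨φ(x), φ(y)⟩. Define kde_P(x) = (1/|P|) Σ_{p∈P} K(x,p) and μ_P = (1/|P|) Σ_{p∈P} φ(p), similarly for Q. If sup_{x∈ℝ^d} |kde_P(x) - kde_Q(x)| ≤ ε, then ‖μ_P - μ_Q‖_H² ≤ 2ε. -/
open RealInnerProductSpace

theorem stmt1 {d : ℕ} {H : Type*} [NormedAddCommGroup H] [InnerProductSpace ℝ H]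
    (φ : EuclideanSpace ℝ (Fin d) → H)
    (K : EuclideanSpace ℝ (Fin d) → EuclideanSpace ℝ (Fin d) → ℝ)
    (hK : ∀ x y, K x y = ⟪φ x, φ y⟫)
    (P Q : Finset (EuclideanSpace ℝ (Fin d))) (hP : P.Nonempty) (hQ : Q.Nonempty)
    (ε : ℝ)
    (h : ∀ x : EuclideanSpace ℝ (Fin d),
      |(P.card : ℝ)⁻¹ * ∑ p ∈ P, K x p - (Q.card : ℝ)⁻¹ * ∑ q ∈ Q, K x q| ≤ ε) :
    ‖(P.card : ℝ)⁻¹ • (∑ p ∈ P, φ p) - (Q.card : ℝ)⁻¹ • (∑ q ∈ Q, φ q)‖ ^ 2 ≤ 2 * ε := by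
  set μP : H := (P.card : ℝ)⁻¹ • (∑ p ∈ P, φ p) with hμP
  set μQ : H := (Q.card : ℝ)⁻¹ • (∑ q ∈ Q, φ q) with hμQ
  set v : H := μP - μQ with hv
  have key : ∀ x, ⟪v, φ x⟫ = (P.card : ℝ)⁻¹ * ∑ p ∈ P, K x p -
      (Q.card : ℝ)⁻¹ * ∑ q ∈ Q, K x q := by
    intro x
    rw [hv, inner_sub_left, hμP, hμQ, real_inner_smul_left, real_inner_smul_left,
      sum_inner, sum_inner]
    congr 2
    · exact Finset.sum_congr rfl fun p _ => by rw [hK, real_inner_comm]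
    · exact Finset.sum_congr rfl fun q _ => by rw [hK, real_inner_comm]
  have hPc : (P.card : ℝ) ≠ 0 := Nat.cast_ne_zero.mpr (Finset.card_ne_zero_of_mem hP.choose_spec)
  have hQc : (Q.card : ℝ) ≠ 0 := Nat.cast_ne_zero.mpr (Finset.card_ne_zero_of_mem hQ.choose_spec)
  have hsq : ‖v‖ ^ 2 = ⟪v, μP⟫ - ⟪v, μQ⟫ := by
    rw [← inner_sub_right, ← hv, real_inner_self_eq_norm_sq]
  have h1 : ⟪v, μP⟫ ≤ ε := by
    rw [hμP, real_inner_smul_right, inner_sum]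
    calc (P.card : ℝ)⁻¹ * ∑ p ∈ P, ⟪v, φ p⟫
        ≤ (P.card : ℝ)⁻¹ * ∑ _p ∈ P, ε := by
          apply mul_le_mul_of_nonneg_left _ (by positivity)
          exact Finset.sum_le_sum fun p _ => le_trans (le_abs_self _)
            (by rw [key p]; exact h p)
      _ = ε := by
          rw [Finset.sum_const, nsmul_eq_mul, ← mul_assoc, inv_mul_cancel₀ hPc, one_mul]
  have h2 : -⟪v, μQ⟫ ≤ ε := by
    rw [hμQ, real_inner_smul_right, inner_sum, ← mul_neg, ← Finset.sum_neg_distrib]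
    calc (Q.card : ℝ)⁻¹ * ∑ q ∈ Q, -⟪v, φ q⟫
        ≤ (Q.card : ℝ)⁻¹ * ∑ _q ∈ Q, ε := by
          apply mul_le_mul_of_nonneg_left _ (by positivity)
          exact Finset.sum_le_sum fun q _ => le_trans (neg_le_abs _)
            (by rw [key q]; exact h q)
      _ = ε := by
          rw [Finset.sum_const, nsmul_eq_mul, ← mul_assoc, inv_mul_cancel₀ hQc, one_mul]
  rw [hsq]; linarith
end

section
/- For any c, x ∈ ℝ^d, exp(-‖x-c‖²) = ∫_{(0,∞)^d} (∏_{i=1}^d 2 r_i exp(-r_i²)) · 𝟙[x ∈ ∏_{i=1}^d [c_i - r_i, c_i + r_i]] dr_1 ⋯ dr_d. -/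
open scoped Classical
open MeasureTheory Set Real

lemma int_Ioi (a : ℝ) : ∫ t in Set.Ioi a, 2 * t * Real.exp (-t ^ 2) = Real.exp (-a ^ 2) := by
  have h := integral_Ioi_of_hasDerivAt_of_tendsto'
    (f := fun t : ℝ => -Real.exp (-t ^ 2)) (f' := fun t : ℝ => 2 * t * Real.exp (-t ^ 2))
    (a := a) (m := 0)
    (fun t _ => by
      have : HasDerivAt (fun t : ℝ => -t ^ 2) (-(2 * t)) t := by
        exact ((hasDerivAt_pow 2 t).neg).congr_deriv (by norm_num)
      have := (this.exp).neg
      convert this using 1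
      · rfl
      ring)
    (by
      have : IntegrableOn (fun t : ℝ => 2 * (t * Real.exp (-1 * t ^ 2))) (Set.Ioi a) := by
        exact ((integrable_mul_exp_neg_mul_sq one_pos).const_mul 2).integrableOn
      refine this.congr_fun (fun t _ => by ring_nf) measurableSet_Ioi)
    (by
      have := (tendsto_exp_neg_atTop_nhds_zero.comp
        (Filter.tendsto_pow_atTop (n := 2) two_ne_zero)).neg
      simpa [Function.comp] using this)
  simpa using h

lemma one_dim (a : ℝ) (ha : 0 ≤ a) :
    ∫ t : ℝ, (2 * t * Real.exp (-t ^ 2)) * ((if 0 < t then (1:ℝ) else 0) *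
      (if a ≤ t then (1:ℝ) else 0)) = Real.exp (-a ^ 2) := by
  have key : ∀ t : ℝ, (2 * t * Real.exp (-t ^ 2)) * ((if 0 < t then (1:ℝ) else 0) *
      (if a ≤ t then (1:ℝ) else 0)) =
      (Set.Ioi 0 ∩ Set.Ici a).indicator (fun t => 2 * t * Real.exp (-t ^ 2)) t := by
    intro t
    by_cases h1 : 0 < t <;> by_cases h2 : a ≤ t <;>
      simp [Set.indicator_apply, Set.mem_inter_iff, h1, h2]
  simp_rw [key]
  rw [MeasureTheory.integral_indicator (by measurability)]
  rcases eq_or_lt_of_le ha with h | h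
  · have : Set.Ioi (0:ℝ) ∩ Set.Ici a = Set.Ioi a := by
      subst h; simp
    rw [this, int_Ioi]
  · have : Set.Ioi (0:ℝ) ∩ Set.Ici a = Set.Ici a := by
      rw [Set.inter_eq_right]
      exact fun t ht => lt_of_lt_of_le h ht
    rw [this, MeasureTheory.integral_Ici_eq_integral_Ioi, int_Ioi]

theorem stmt6 {d : ℕ} (c x : EuclideanSpace ℝ (Fin d)) :
    Real.exp (-‖x - c‖ ^ 2) =
      ∫ r : EuclideanSpace ℝ (Fin d) in (WithLp.ofLp ⁻¹' (Set.univ.pi fun _ : Fin d => Set.Ioi (0 : ℝ))),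
        (∏ i, 2 * r i * Real.exp (-(r i) ^ 2)) *
          (if ∀ i, c i - r i ≤ x i ∧ x i ≤ c i + r i then (1 : ℝ) else 0) := by
  have hmeas : MeasurableSet (Set.univ.pi fun _ : Fin d => Set.Ioi (0 : ℝ) : Set (Fin d → ℝ)) :=
    MeasurableSet.univ_pi fun _ => measurableSet_Ioi
  have hT : (∫ r : EuclideanSpace ℝ (Fin d) in (WithLp.ofLp ⁻¹' (Set.univ.pi fun _ : Fin d => Set.Ioi (0 : ℝ))),
        (∏ i, 2 * r i * Real.exp (-(r i) ^ 2)) *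
          (if ∀ i, c i - r i ≤ x i ∧ x i ≤ c i + r i then (1 : ℝ) else 0)) =
        ∫ r : Fin d → ℝ in (Set.univ.pi fun _ : Fin d => Set.Ioi (0 : ℝ)),
          (∏ i, 2 * r i * Real.exp (-(r i) ^ 2)) *
            (if ∀ i, c i - r i ≤ x i ∧ x i ≤ c i + r i then (1 : ℝ) else 0) :=
    (PiLp.volume_preserving_ofLp (Fin d)).setIntegral_preimage_emb
      (MeasurableEquiv.toLp 2 (Fin d → ℝ)).symm.measurableEmbedding
      (fun r : Fin d → ℝ => (∏ i, 2 * r i * Real.exp (-(r i) ^ 2)) *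
        (if ∀ i, c i - r i ≤ x i ∧ x i ≤ c i + r i then (1 : ℝ) else 0))
      (Set.univ.pi fun _ : Fin d => Set.Ioi (0 : ℝ))
  rw [hT]
  rw [← MeasureTheory.integral_indicator hmeas]
  have hfun : ∀ r : Fin d → ℝ,
      (Set.univ.pi fun _ : Fin d => Set.Ioi (0 : ℝ)).indicator
        (fun r : Fin d → ℝ => (∏ i, 2 * r i * Real.exp (-(r i) ^ 2)) *
          (if ∀ i, c i - r i ≤ x i ∧ x i ≤ c i + r i then (1 : ℝ) else 0)) r =
      ∏ i, (2 * r i * Real.exp (-(r i) ^ 2)) * ((if 0 < r i then (1:ℝ) else 0) *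
        (if |x i - c i| ≤ r i then (1:ℝ) else 0)) := by
    intro r
    have habs : ∀ i, (c i - r i ≤ x i ∧ x i ≤ c i + r i) ↔ |x i - c i| ≤ r i := by
      intro i; rw [abs_sub_le_iff]; constructor <;> intro h <;> constructor <;> linarith [h.1, h.2]
    rw [Set.indicator_apply]
    by_cases hr : r ∈ Set.univ.pi fun _ : Fin d => Set.Ioi (0 : ℝ)
    · simp only [hr, if_pos]
      have hpos : ∀ i, (0:ℝ) < r i := fun i => hr i (Set.mem_univ i)
      by_cases hall : ∀ i, c i - r i ≤ x i ∧ x i ≤ c i + r i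
      · rw [if_pos hall, mul_one]
        refine Finset.prod_congr rfl fun i _ => ?_
        rw [if_pos (hpos i), if_pos ((habs i).mp (hall i))]
        ring
      · rw [if_neg hall, mul_zero]
        rw [not_forall] at hall
        obtain ⟨i, hi⟩ := hall
        have : ¬ |x i - c i| ≤ r i := fun h => hi ((habs i).mpr h)
        refine (Finset.prod_eq_zero (Finset.mem_univ i) ?_).symm
        rw [if_neg this]; ring
    · rw [if_neg hr]
      have hex : ∃ i, ¬ (0 < r i) := by
        simpa [Set.mem_pi, not_forall] using hr
      obtain ⟨i, hi⟩ := hex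
      refine (Finset.prod_eq_zero (Finset.mem_univ i) ?_).symm
      rw [if_neg hi]; ring
  simp_rw [hfun]
  rw [MeasureTheory.integral_fintype_prod_volume_eq_prod
    (f := fun i (t : ℝ) => (2 * t * Real.exp (-t ^ 2)) * ((if 0 < t then (1:ℝ) else 0) *
      (if |x i - c i| ≤ t then (1:ℝ) else 0)))]
  have hkey : ∀ i, (∫ t : ℝ, (2 * t * Real.exp (-t ^ 2)) * ((if 0 < t then (1:ℝ) else 0) *
      (if |x i - c i| ≤ t then (1:ℝ) else 0))) = Real.exp (-(x i - c i) ^ 2) := by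
    intro i
    rw [one_dim _ (abs_nonneg _), sq_abs]
  simp_rw [hkey, ← Real.exp_sum]
  congr 1
  rw [EuclideanSpace.norm_eq, Real.sq_sqrt (by positivity)]
  simp [Finset.sum_neg_distrib]
end

section
/- Let P ⊂ ℝ^d be a finite set and χ : P → {-1, +1} a coloring. Let disc_R(P,χ) = sup over axis-aligned boxes R of |Σ_{p∈P∩R} χ(p)|, and let disc_K(P,χ) = sup_{x∈ℝ^d} |Σ_{p∈P} χ(p) exp(-‖x-p‖²)|. Then disc_K(P,χ) ≤ disc_R(P,χ). -/
open scoped Classical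

open MeasureTheory

/-- layer-cake for an indicator: integral over (0,1] of `1_{σ ≤ c}` is `c`. -/
lemma layer_cake_aux (c : ℝ) (hc0 : 0 < c) (hc1 : c ≤ 1) :
    ∫ σ in Set.Ioc (0:ℝ) 1, (if σ ≤ c then (1:ℝ) else 0) = c := by
  have h : (fun σ : ℝ => if σ ≤ c then (1:ℝ) else 0)
      = Set.indicator (Set.Iic c) (fun _ => (1:ℝ)) := by
    ext σ; simp [Set.indicator_apply, Set.mem_Iic]
  rw [h, MeasureTheory.setIntegral_indicator measurableSet_Iic]
  have h2 : Set.Ioc (0:ℝ) 1 ∩ Set.Iic c = Set.Ioc 0 c := by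
    rw [Set.Ioc_inter_Iic, min_eq_right hc1]
  rw [h2]
  simp [Real.volume_Ioc, ENNReal.toReal_ofReal hc0.le, hc0.le]

lemma integrable_aux (C c : ℝ) :
    MeasureTheory.IntegrableOn (fun σ : ℝ => C * if σ ≤ c then (1:ℝ) else 0)
      (Set.Ioc (0:ℝ) 1) := by
  have h : (fun σ : ℝ => C * if σ ≤ c then (1:ℝ) else 0)
      = Set.indicator (Set.Iic c) (fun _ => C) := by
    ext σ; simp [Set.indicator_apply, Set.mem_Iic, mul_ite]
  rw [h]
  exact (MeasureTheory.integrableOn_const measure_Ioc_lt_top.ne).indicator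
    measurableSet_Iic

theorem stmt7 {d : ℕ} (P : Finset (EuclideanSpace ℝ (Fin d)))
    (χ : EuclideanSpace ℝ (Fin d) → ℝ) (hχ : ∀ p ∈ P, χ p = 1 ∨ χ p = -1)
    (B : ℝ)
    (hB : ∀ m M : Fin d → ℝ,
      |∑ p ∈ P, (if ∀ i, m i ≤ p i ∧ p i ≤ M i then χ p else 0)| ≤ B) :
    ∀ x : EuclideanSpace ℝ (Fin d),
      |∑ p ∈ P, χ p * Real.exp (-‖x - p‖ ^ 2)| ≤ B := by
  intro x
  set e : Fin d → EuclideanSpace ℝ (Fin d) → ℝ :=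
    fun i p => Real.exp (-(x i - p i) ^ 2) with he
  have hepos : ∀ i p, 0 < e i p := fun i p => Real.exp_pos _
  have hele : ∀ i p, e i p ≤ 1 := by
    intro i p
    exact Real.exp_le_one_iff.2 (neg_nonpos.2 (sq_nonneg _))
  have key : ∀ t : Finset (Fin d), ∀ m M : Fin d → ℝ,
      |∑ p ∈ P, χ p * ((∏ i ∈ t, e i p) *
        (if ∀ i, i ∉ t → m i ≤ p i ∧ p i ≤ M i then (1:ℝ) else 0))| ≤ B := by
    intro t
    induction t using Finset.induction_on with
    | empty =>
      intro m M
      have := hB m M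
      have hsum : ∑ p ∈ P, χ p * ((∏ i ∈ (∅ : Finset (Fin d)), e i p) *
          (if ∀ i, i ∉ (∅ : Finset (Fin d)) → m i ≤ p i ∧ p i ≤ M i then (1:ℝ) else 0))
          = ∑ p ∈ P, (if ∀ i, m i ≤ p i ∧ p i ≤ M i then χ p else 0) := by
        apply Finset.sum_congr rfl
        intro p _
        simp [mul_ite]
      rw [hsum]
      exact this
    | @insert j s hj ih =>
      intro m M
      -- term for each p not involving coordinate j
      set T : EuclideanSpace ℝ (Fin d) → ℝ := fun p =>
        χ p * ((∏ i ∈ s, e i p) *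
          (if ∀ i, i ∉ s → i ≠ j → m i ≤ p i ∧ p i ≤ M i then (1:ℝ) else 0)) with hT
      -- Step 1 : goal sum equals ∑ T p * e j p
      have h1 : ∑ p ∈ P, χ p * ((∏ i ∈ insert j s, e i p) *
          (if ∀ i, i ∉ insert j s → m i ≤ p i ∧ p i ≤ M i then (1:ℝ) else 0))
          = ∑ p ∈ P, T p * e j p := by
        apply Finset.sum_congr rfl
        intro p _
        rw [Finset.prod_insert hj]
        have hcond : (∀ i, i ∉ insert j s → m i ≤ p i ∧ p i ≤ M i)
            ↔ (∀ i, i ∉ s → i ≠ j → m i ≤ p i ∧ p i ≤ M i) := by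
          constructor
          · intro h i his hij
            exact h i (by simp [his, hij])
          · intro h i hins
            simp only [Finset.mem_insert, not_or] at hins
            exact h i hins.2 hins.1
        rw [if_congr hcond rfl rfl, hT]
        ring
      rw [h1]
      -- Step 2 : ∑ T p * e j p = ∫ G
      set G : ℝ → ℝ := fun σ => ∑ p ∈ P, T p * (if σ ≤ e j p then (1:ℝ) else 0) with hG
      have h2 : ∫ σ in Set.Ioc (0:ℝ) 1, G σ = ∑ p ∈ P, T p * e j p := by
        rw [hG]
        rw [MeasureTheory.integral_finset_sum _ (fun p _ => integrable_aux (T p) (e j p))]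
        apply Finset.sum_congr rfl
        intro p _
        rw [MeasureTheory.integral_const_mul, layer_cake_aux _ (hepos j p) (hele j p)]
      rw [← h2]
      -- Step 3 : for σ ∈ Ioc 0 1, |G σ| ≤ B via ih
      have h3 : ∀ σ ∈ Set.Ioc (0:ℝ) 1, |G σ| ≤ B := by
        intro σ hσ
        set r : ℝ := Real.sqrt (-Real.log σ) with hr
        have hrnn : 0 ≤ -Real.log σ := by
          have := Real.log_nonpos hσ.1.le hσ.2
          linarith
        have hcj : ∀ p : EuclideanSpace ℝ (Fin d),
            (x j - r ≤ p j ∧ p j ≤ x j + r) ↔ σ ≤ e j p := by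
          intro p
          have h4 : (x j - r ≤ p j ∧ p j ≤ x j + r) ↔ |x j - p j| ≤ r := by
            rw [abs_le]
            constructor <;> (intro h; constructor <;> linarith [h.1, h.2])
          rw [h4, hr, show |x j - p j| ≤ Real.sqrt (-Real.log σ)
              ↔ |x j - p j| ^ 2 ≤ -Real.log σ from Real.le_sqrt (abs_nonneg _) hrnn,
            sq_abs, he]
          rw [← Real.log_le_iff_le_exp hσ.1]
          constructor <;> intro h <;> linarith
        have hGF : G σ = ∑ p ∈ P, χ p * ((∏ i ∈ s, e i p) *
            (if ∀ i, i ∉ s → (Function.update m j (x j - r)) i ≤ p i ∧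
                p i ≤ (Function.update M j (x j + r)) i then (1:ℝ) else 0)) := by
          rw [hG]
          apply Finset.sum_congr rfl
          intro p _
          have hcond : (∀ i, i ∉ s → (Function.update m j (x j - r)) i ≤ p i ∧
                p i ≤ (Function.update M j (x j + r)) i)
              ↔ ((σ ≤ e j p) ∧ ∀ i, i ∉ s → i ≠ j → m i ≤ p i ∧ p i ≤ M i) := by
            constructor
            · intro h
              refine ⟨(hcj p).1 (by simpa using h j hj), fun i his hij => by
                simpa [Function.update_of_ne hij] using h i his⟩
            · rintro ⟨hA, hrest⟩ i his
              by_cases hij : i = j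
              · subst hij
                simpa using (hcj p).2 hA
              · simpa [Function.update_of_ne hij] using hrest i his hij
          rw [if_congr hcond rfl rfl, hT]
          by_cases hA : σ ≤ e j p <;>
            by_cases hrest : ∀ i, i ∉ s → i ≠ j → m i ≤ p i ∧ p i ≤ M i <;>
            simp [hA, hrest]
        rw [hGF]
        exact ih (Function.update m j (x j - r)) (Function.update M j (x j + r))
      -- Step 4 : bound the integral
      rw [← Real.norm_eq_abs]
      have hmeas : MeasureTheory.AEStronglyMeasurable G
          (MeasureTheory.volume.restrict (Set.Ioc (0:ℝ) 1)) := by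
        rw [hG]
        exact Finset.aestronglyMeasurable_fun_sum P
          (fun p _ => (integrable_aux (T p) (e j p)).aestronglyMeasurable)
      calc ‖∫ σ in Set.Ioc (0:ℝ) 1, G σ‖
          ≤ B * (MeasureTheory.volume (Set.Ioc (0:ℝ) 1)).toReal := by
            apply MeasureTheory.norm_setIntegral_le_of_norm_le_const measure_Ioc_lt_top
              (fun σ hσ => by simpa [Real.norm_eq_abs] using h3 σ hσ)
        _ = B := by simp [Real.volume_Ioc]
  -- conclude
  have hfin := key Finset.univ 0 0
  have hprod : ∀ p : EuclideanSpace ℝ (Fin d),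
      (∏ i, e i p) = Real.exp (-‖x - p‖ ^ 2) := by
    intro p
    have hn : ‖x - p‖ ^ 2 = ∑ i, (x i - p i) ^ 2 := by
      rw [EuclideanSpace.norm_eq]
      rw [Real.sq_sqrt (by positivity)]
      apply Finset.sum_congr rfl
      intro i _
      simp [Real.norm_eq_abs, sq_abs]
    rw [hn, ← Finset.sum_neg_distrib, Real.exp_sum]
  have : ∑ p ∈ P, χ p * ((∏ i, e i p) *
      (if ∀ i, i ∉ Finset.univ → (0:Fin d → ℝ) i ≤ p i ∧ p i ≤ (0:Fin d → ℝ) i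
        then (1:ℝ) else 0)) = ∑ p ∈ P, χ p * Real.exp (-‖x - p‖ ^ 2) := by
    apply Finset.sum_congr rfl
    intro p _
    rw [hprod p]
    simp
  rw [this] at hfin
  exact hfin
end

section
/- Let z > 0 and let p_i = (z/√2)·e_i ∈ ℝ^n for i = 1,…,n, where e_i is the i-th standard basis vector. For 1 ≤ k < n, let p̄_k = (1/k) Σ_{i=1}^k p_i and p̄ = (1/n) Σ_{i=1}^n p_i. Then ‖p̄ - p̄_k‖ = (z/√2)·√(1/k - 1/n). -/
theorem stmt9 {n k : ℕ} (hk : 1 ≤ k) (hkn : k < n) (z : ℝ) (hz : 0 < z)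
    (p : Fin n → EuclideanSpace ℝ (Fin n))
    (hp : ∀ i, p i = (z / Real.sqrt 2) • EuclideanSpace.single i (1 : ℝ)) :
    ‖((n : ℝ)⁻¹ • ∑ i, p i) -
        ((k : ℝ)⁻¹ • ∑ i ∈ Finset.univ.filter (fun i : Fin n => (i : ℕ) < k), p i)‖ =
      (z / Real.sqrt 2) * Real.sqrt (1 / k - 1 / n) := by
  have h2 : (0:ℝ) < Real.sqrt 2 := Real.sqrt_pos.2 (by norm_num)
  set c := z / Real.sqrt 2 with hc
  have hcpos : 0 < c := div_pos hz h2
  have hn0 : 0 < (n:ℝ) := by exact_mod_cast Nat.zero_lt_of_lt hkn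
  have hk0 : 0 < (k:ℝ) := by exact_mod_cast hk
  have hcoord : ∀ j : Fin n,
      (((n : ℝ)⁻¹ • ∑ i, p i) -
        ((k : ℝ)⁻¹ • ∑ i ∈ Finset.univ.filter (fun i : Fin n => (i : ℕ) < k), p i)) j
      = c * ((n:ℝ)⁻¹ - if (j:ℕ) < k then (k:ℝ)⁻¹ else 0) := by
    intro j
    have e1 : (∑ i : Fin n, (c • EuclideanSpace.single i (1:ℝ) : EuclideanSpace ℝ (Fin n))) j
        = ∑ i : Fin n, (c • EuclideanSpace.single i (1:ℝ) : EuclideanSpace ℝ (Fin n)) j :=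
      by rw [WithLp.ofLp_sum, Finset.sum_apply]
    have e2 : (∑ i ∈ Finset.univ.filter (fun i : Fin n => (i : ℕ) < k),
          (c • EuclideanSpace.single i (1:ℝ) : EuclideanSpace ℝ (Fin n))) j
        = ∑ i ∈ Finset.univ.filter (fun i : Fin n => (i : ℕ) < k),
          (c • EuclideanSpace.single i (1:ℝ) : EuclideanSpace ℝ (Fin n)) j :=
      by rw [WithLp.ofLp_sum, Finset.sum_apply]
    simp only [hp, PiLp.sub_apply, PiLp.smul_apply, smul_eq_mul]
    rw [e1, e2]
    simp only [PiLp.smul_apply, EuclideanSpace.single_apply, smul_eq_mul,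
      mul_ite, mul_one, mul_zero]
    rw [Finset.sum_ite_eq Finset.univ j (fun _ => c),
      Finset.sum_ite_eq (Finset.univ.filter (fun i : Fin n => (i : ℕ) < k)) j (fun _ => c)]
    simp only [Finset.mem_univ, if_true, Finset.mem_filter, true_and]
    split_ifs <;> ring
  rw [EuclideanSpace.norm_eq]
  have hsum : ∑ j : Fin n,
      ‖(((n : ℝ)⁻¹ • ∑ i, p i) -
        ((k : ℝ)⁻¹ • ∑ i ∈ Finset.univ.filter (fun i : Fin n => (i : ℕ) < k), p i)) j‖ ^ 2
      = c ^ 2 * (1 / k - 1 / n) := by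
    simp only [hcoord, Real.norm_eq_abs, sq_abs]
    rw [show (∑ j : Fin n, (c * ((n:ℝ)⁻¹ - if (j:ℕ) < k then (k:ℝ)⁻¹ else 0)) ^ 2)
        = ∑ m ∈ Finset.range n, (c * ((n:ℝ)⁻¹ - if m < k then (k:ℝ)⁻¹ else 0)) ^ 2
      from Fin.sum_univ_eq_sum_range (fun m => (c * ((n:ℝ)⁻¹ - if m < k then (k:ℝ)⁻¹ else 0)) ^ 2) n]
    rw [Finset.range_eq_Ico, ← Finset.sum_Ico_consecutive _ (Nat.zero_le k) hkn.le]
    have hA : ∑ m ∈ Finset.Ico 0 k, (c * ((n:ℝ)⁻¹ - if m < k then (k:ℝ)⁻¹ else 0)) ^ 2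
        = ∑ m ∈ Finset.Ico 0 k, (c * ((n:ℝ)⁻¹ - (k:ℝ)⁻¹)) ^ 2 :=
      Finset.sum_congr rfl fun m hm => by rw [if_pos (Finset.mem_Ico.mp hm).2]
    have hB : ∑ m ∈ Finset.Ico k n, (c * ((n:ℝ)⁻¹ - if m < k then (k:ℝ)⁻¹ else 0)) ^ 2
        = ∑ m ∈ Finset.Ico k n, (c * ((n:ℝ)⁻¹ - 0)) ^ 2 :=
      Finset.sum_congr rfl fun m hm => by rw [if_neg (not_lt.mpr (Finset.mem_Ico.mp hm).1)]
    rw [hA, hB]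
    simp only [Finset.sum_const, Nat.card_Ico, nsmul_eq_mul, Nat.sub_zero]
    rw [Nat.cast_sub hkn.le]
    field_simp
    ring
  rw [hsum, Real.sqrt_mul (sq_nonneg c), Real.sqrt_sq hcpos.le]
end

section
/- Let z > 0, 1 ≤ k < n, and p_i = (z/√2)·e_i ∈ ℝ^n. Define p̄_k = (1/k)Σ_{i≤k} p_i, p̄ = (1/n)Σ_{i=1}^n p_i, and p = p̄_k + (z/√2)·(p̄_k - p̄)/‖p̄_k - p̄‖. Then for every i with 1 ≤ i ≤ k, ‖p - p_i‖² = z² - z²/(2k). -/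
open RealInnerProductSpace

theorem stmt11 {n k : ℕ} (hk : 1 ≤ k) (hkn : k < n) (z : ℝ) (hz : 0 < z)
    (p : Fin n → EuclideanSpace ℝ (Fin n))
    (hp : ∀ i, p i = (z / Real.sqrt 2) • EuclideanSpace.single i (1 : ℝ))
    (pbark pbar q : EuclideanSpace ℝ (Fin n))
    (hpbark : pbark = (k : ℝ)⁻¹ • ∑ i ∈ Finset.univ.filter (fun i : Fin n => (i : ℕ) < k), p i)
    (hpbar : pbar = (n : ℝ)⁻¹ • ∑ i, p i)
    (hq : q = pbark + (z / Real.sqrt 2) • (‖pbark - pbar‖⁻¹ • (pbark - pbar))) :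
    ∀ i : Fin n, (i : ℕ) < k → ‖q - p i‖ ^ 2 = z ^ 2 - z ^ 2 / (2 * k) := by
  intro i hi
  have hs2 : (0:ℝ) < Real.sqrt 2 := by positivity
  set c := z / Real.sqrt 2 with hc
  have hcpos : 0 < c := div_pos hz hs2
  have hc2 : c ^ 2 = z ^ 2 / 2 := by
    rw [hc, div_pow, Real.sq_sqrt (by norm_num : (2:ℝ) ≥ 0)]
  have hk0 : (0:ℝ) < (k:ℝ) := by exact_mod_cast hk
  have hn0 : (0:ℝ) < (n:ℝ) := by exact_mod_cast (hk.trans hkn.le)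
  set F := Finset.univ.filter (fun j : Fin n => (j:ℕ) < k) with hF
  have hcard : F.card = k := by
    have : F = Finset.Iio (⟨k, hkn⟩ : Fin n) := by
      ext j; simp [hF, Fin.lt_def]
    rw [this, Fin.card_Iio]
  have hiF : i ∈ F := by simp [hF, hi]
  have hpp : ∀ a b : Fin n, ⟪p a, p b⟫ = if a = b then c ^ 2 else 0 := by
    intro a b
    simp only [hp, real_inner_smul_left, real_inner_smul_right,
      EuclideanSpace.inner_single_left, EuclideanSpace.single_apply, conj_trivial]
    by_cases h : a = b <;> simp [h, eq_comm] <;> ring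
  have hA : ⟪pbark, pbark⟫ = c ^ 2 / k := by
    rw [hpbark, real_inner_smul_left, real_inner_smul_right, sum_inner]
    simp only [inner_sum, hpp]
    rw [Finset.sum_congr rfl fun a ha => Finset.sum_ite_eq F a fun _ => c ^ 2]
    simp only [Finset.sum_ite_mem, Finset.inter_self, Finset.sum_const, hcard, nsmul_eq_mul]
    field_simp
  have hP : ⟪pbar, pbar⟫ = c ^ 2 / n := by
    rw [hpbar, real_inner_smul_left, real_inner_smul_right, sum_inner]
    simp only [inner_sum, hpp]
    simp only [Finset.sum_ite_eq, Finset.mem_univ, if_true, Finset.sum_const,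
      Finset.card_univ, Fintype.card_fin, nsmul_eq_mul]
    field_simp
  have hB : ⟪pbark, pbar⟫ = c ^ 2 / n := by
    rw [hpbark, hpbar, real_inner_smul_left, real_inner_smul_right, sum_inner]
    simp only [inner_sum, hpp]
    simp only [Finset.sum_ite_eq, Finset.mem_univ, if_true, Finset.sum_const, hcard,
      nsmul_eq_mul]
    field_simp
  have hC : ⟪p i, pbark⟫ = c ^ 2 / k := by
    rw [hpbark, real_inner_smul_right, inner_sum]
    simp only [hpp]
    rw [Finset.sum_ite_eq F i fun _ => c ^ 2]
    simp only [hiF, if_true]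
    field_simp
  have hD : ⟪p i, pbar⟫ = c ^ 2 / n := by
    rw [hpbar, real_inner_smul_right, inner_sum]
    simp only [hpp]
    simp only [Finset.sum_ite_eq, Finset.mem_univ, if_true]
    field_simp
  have hE : ⟪p i, p i⟫ = c ^ 2 := by rw [hpp, if_pos rfl]
  have hB' : ⟪pbar, pbark⟫ = c ^ 2 / n := by rw [real_inner_comm]; exact hB
  have hC' : ⟪pbark, p i⟫ = c ^ 2 / k := by rw [real_inner_comm]; exact hC
  have hdd : ⟪pbark - pbar, pbark - pbar⟫ = c ^ 2 / k - c ^ 2 / n := by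
    simp only [inner_sub_left, inner_sub_right, hA, hB, hB', hP]
    ring
  have hddpos : (0:ℝ) < c ^ 2 / k - c ^ 2 / n := by
    have : c ^ 2 / n < c ^ 2 / k :=
      div_lt_div_of_pos_left (by positivity) hk0 (by exact_mod_cast hkn)
    linarith
  have hdn : ‖pbark - pbar‖ ≠ 0 := by
    intro h
    rw [real_inner_self_eq_norm_sq, h] at hdd
    simp at hdd; linarith
  have hq' : q - p i = (pbark - p i) + (c * ‖pbark - pbar‖⁻¹) • (pbark - pbar) := by
    rw [hq, smul_smul]; abel
  have h0 : ⟪pbark - p i, pbark - pbar⟫ = 0 := by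
    simp only [inner_sub_left, inner_sub_right, hA, hB, hC, hD]; ring
  have hsub : ⟪pbark - p i, pbark - p i⟫ = c ^ 2 - c ^ 2 / k := by
    simp only [inner_sub_left, inner_sub_right, hA, hC, hC', hE]
    ring
  rw [hq', norm_add_sq_real, real_inner_smul_right, h0, mul_zero,
    ← real_inner_self_eq_norm_sq, hsub, norm_smul, mul_pow]
  have : ‖c * ‖pbark - pbar‖⁻¹‖ ^ 2 * ‖pbark - pbar‖ ^ 2 = c ^ 2 := by
    rw [Real.norm_eq_abs, sq_abs, mul_pow]
    field_simp
  rw [this, hc2]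
  field_simp
  ring
end

section
/- Let z > 0, 1 ≤ k < n, and p_i = (z/√2)·e_i ∈ ℝ^n. With p̄_k, p̄, p as before and p̄_{-k} = (1/(n-k)) Σ_{i=k+1}^n p_i, then for every i with k+1 ≤ i ≤ n, ‖p - p_i‖² = (z²/2)·(1 + √(1/k - 1/n) + √(1/(n-k) - 1/n))² + (z²/2)·(1 - 1/(n-k)). -/
lemma aux_norm_sq_eq {n : ℕ} (x : EuclideanSpace ℝ (Fin n)) :
    ‖x‖ ^ 2 = ∑ j, (x j) ^ 2 := by
  rw [EuclideanSpace.norm_eq, Real.sq_sqrt (by positivity)]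
  simp [sq_abs]

lemma aux_sum_range_split (n k : ℕ) (hkn : k ≤ n) (f : ℕ → ℝ) :
    ∑ m ∈ Finset.range n, f m
      = ∑ m ∈ Finset.range k, f m + ∑ m ∈ Finset.Ico k n, f m := by
  rw [Finset.range_eq_Ico, ← Finset.sum_Ico_consecutive f (Nat.zero_le k) hkn, Finset.range_eq_Ico]

set_option maxHeartbeats 1000000 in
theorem stmt12 {n k : ℕ} (hk : 1 ≤ k) (hkn : k < n) (z : ℝ) (hz : 0 < z)
    (p : Fin n → EuclideanSpace ℝ (Fin n))
    (hp : ∀ i, p i = (z / Real.sqrt 2) • EuclideanSpace.single i (1 : ℝ))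
    (pbark pbar q : EuclideanSpace ℝ (Fin n))
    (hpbark : pbark = (k : ℝ)⁻¹ • ∑ i ∈ Finset.univ.filter (fun i : Fin n => (i : ℕ) < k), p i)
    (hpbar : pbar = (n : ℝ)⁻¹ • ∑ i, p i)
    (hq : q = pbark + (z / Real.sqrt 2) • (‖pbark - pbar‖⁻¹ • (pbark - pbar))) :
    ∀ i : Fin n, k ≤ (i : ℕ) →
      ‖q - p i‖ ^ 2 =
        (z ^ 2 / 2) *
            (1 + Real.sqrt (1 / k - 1 / n) + Real.sqrt (1 / ((n : ℝ) - k) - 1 / n)) ^ 2 +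
          (z ^ 2 / 2) * (1 - 1 / ((n : ℝ) - k)) := by
  intro i hi
  have hn : 0 < n := lt_of_le_of_lt (Nat.zero_le k) hkn
  have hK0 : (0:ℝ) < k := by exact_mod_cast hk
  have hN0 : (0:ℝ) < n := by exact_mod_cast hn
  have hKN : (k:ℝ) < n := by exact_mod_cast hkn
  have hNK0 : (0:ℝ) < (n:ℝ) - k := by linarith
  set c := z / Real.sqrt 2 with hcdef
  have hc0 : 0 < c := div_pos hz (Real.sqrt_pos.mpr (by norm_num))
  have hc2 : c ^ 2 = z ^ 2 / 2 := by
    rw [hcdef, div_pow, Real.sq_sqrt (by norm_num : (0:ℝ) ≤ 2)]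
  set s := Real.sqrt (1/(k:ℝ) - 1/n) with hsdef
  set t := Real.sqrt (1/((n:ℝ)-k) - 1/n) with htdef
  have hsv : (0:ℝ) < 1/(k:ℝ) - 1/n := by
    rw [sub_pos]; exact one_div_lt_one_div_of_lt hK0 hKN
  have htv : (0:ℝ) < 1/((n:ℝ)-k) - 1/n := by
    rw [sub_pos]; apply one_div_lt_one_div_of_lt hNK0; linarith
  have hs0 : 0 < s := Real.sqrt_pos.mpr hsv
  have ht0 : 0 < t := Real.sqrt_pos.mpr htv
  have hs2 : s^2 = 1/(k:ℝ) - 1/n := Real.sq_sqrt hsv.le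
  have ht2 : t^2 = 1/((n:ℝ)-k) - 1/n := Real.sq_sqrt htv.le
  have hst : s * t = 1/(n:ℝ) := by
    rw [hsdef, htdef, ← Real.sqrt_mul hsv.le,
      show (1/(k:ℝ) - 1/n) * (1/((n:ℝ)-k) - 1/n) = (1/(n:ℝ))^2 by
        field_simp; ring]
    exact Real.sqrt_sq (by positivity)
  -- coordinates
  have hpj : ∀ (a j : Fin n), p a j = if j = a then c else 0 := by
    intro a j
    rw [hp a]
    by_cases h : j = a <;> simp [EuclideanSpace.single_apply, h]
  have hpbarkj : ∀ j : Fin n, pbark j = if (j:ℕ) < k then c / k else 0 := by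
    intro j
    rw [hpbark]
    have hs' : (∑ x ∈ Finset.univ.filter (fun i : Fin n => (i:ℕ) < k), p x) j
        = ∑ x ∈ Finset.univ.filter (fun i : Fin n => (i:ℕ) < k), (if j = x then c else 0) := by
      rw [WithLp.ofLp_sum, Finset.sum_apply]
      exact Finset.sum_congr rfl fun x _ => hpj x j
    simp only [PiLp.smul_apply, smul_eq_mul, hs', Finset.sum_ite_eq, Finset.mem_filter,
      Finset.mem_univ, true_and]
    split_ifs with h
    · exact inv_mul_eq_div _ _
    · exact mul_zero _
  have hpbarj : ∀ j : Fin n, pbar j = c / n := by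
    intro j
    rw [hpbar]
    have hs' : (∑ x, p x) j = ∑ x, (if j = x then c else 0) := by
      rw [WithLp.ofLp_sum, Finset.sum_apply]
      exact Finset.sum_congr rfl fun x _ => hpj x j
    simp only [PiLp.smul_apply, smul_eq_mul, hs', Finset.sum_ite_eq, Finset.mem_univ, if_true]
    exact inv_mul_eq_div _ _
  have hdj : ∀ j : Fin n, (pbark - pbar) j = if (j:ℕ) < k then c/k - c/n else -(c/n) := by
    intro j
    have h0 : (pbark - pbar) j = pbark j - pbar j := rfl
    rw [h0, hpbarkj j, hpbarj j]
    split_ifs with h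
    · rfl
    · exact zero_sub _
  -- norm of pbark - pbar
  have hnorm : ‖pbark - pbar‖ = c * s := by
    have h1 : ‖pbark - pbar‖^2 = ∑ j, ((pbark - pbar) j)^2 := aux_norm_sq_eq _
    have h2 : ∑ j : Fin n, ((pbark - pbar) j)^2
        = k * (c/k - c/n)^2 + ((n:ℝ) - k)*(c/n)^2 := by
      calc ∑ j : Fin n, ((pbark - pbar) j)^2
          = ∑ m ∈ Finset.range n, (if m < k then (c/k - c/n)^2 else (c/n)^2) := by
            rw [← Fin.sum_univ_eq_sum_range]
            refine Finset.sum_congr rfl fun j _ => ?_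
            rw [hdj j]; split_ifs <;> ring
        _ = (∑ _m ∈ Finset.range k, (c/k - c/n)^2) + ∑ _m ∈ Finset.Ico k n, (c/n)^2 := by
            rw [aux_sum_range_split n k hkn.le]
            congr 1
            · exact Finset.sum_congr rfl fun m hm => if_pos (Finset.mem_range.mp hm)
            · exact Finset.sum_congr rfl fun m hm =>
                if_neg (Nat.not_lt.mpr (Finset.mem_Ico.mp hm).1)
        _ = k * (c/k - c/n)^2 + ((n:ℝ) - k)*(c/n)^2 := by
            rw [Finset.sum_const, Finset.sum_const, Finset.card_range, Nat.card_Ico]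
            simp [nsmul_eq_mul, Nat.cast_sub hkn.le]
    have h3 : (k:ℝ) * (c/k - c/n)^2 + ((n:ℝ)-k)*(c/n)^2 = (c*s)^2 := by
      rw [mul_pow, hs2]
      field_simp
      ring
    calc ‖pbark - pbar‖ = Real.sqrt (‖pbark - pbar‖^2) := (Real.sqrt_sq (norm_nonneg _)).symm
      _ = Real.sqrt ((c*s)^2) := by rw [h1, h2, h3]
      _ = c * s := Real.sqrt_sq (by positivity)
  -- coordinates of q - p i
  have hqj : ∀ j : Fin n, (q - p i) j =
      if (j:ℕ) < k then c*(1/(k:ℝ)) + c*s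
      else (if (j:ℕ) = (i:ℕ) then -(c*t) - c else -(c*t)) := by
    intro j
    have hq1 : (q - p i) j = pbark j + c * ((c*s)⁻¹ * (pbark - pbar) j) - p i j := by
      rw [hq, hnorm]; rfl
    rw [hq1, hpbarkj j, hdj j, hpj i j]
    by_cases h : (j:ℕ) < k
    · have hji : j ≠ i := by
        intro he; rw [he] at h; omega
      rw [if_pos h, if_pos h, if_pos h, if_neg hji]
      have key : c/(k:ℝ) - c/(n:ℝ) = c*s^2 := by rw [hs2]; field_simp
      rw [key]
      field_simp
      ring
    · rw [if_neg h, if_neg h, if_neg h]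
      have key2 : c * ((c*s)⁻¹ * (-(c/(n:ℝ)))) = -(c*t) := by
        have hts : t = (1/(n:ℝ))/s := by rw [eq_div_iff hs0.ne', mul_comm, hst]
        rw [hts, mul_inv]
        field_simp
      rw [key2]
      by_cases hji : j = i
      · rw [if_pos hji, if_pos (by rw [hji])]
        ring
      · rw [if_neg hji, if_neg (fun hv => hji (Fin.ext hv))]
        ring
  -- sum of squares
  have hsum : ∑ j : Fin n, ((q - p i) j)^2
      = k * (c*(1/(k:ℝ)) + c*s)^2
        + (((n:ℝ)-k) * (-(c*t))^2 + ((-(c*t) - c)^2 - (-(c*t))^2)) := by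
    calc ∑ j : Fin n, ((q - p i) j)^2
        = ∑ m ∈ Finset.range n, (if m < k then (c*(1/(k:ℝ))+c*s)^2
            else (if m = (i:ℕ) then (-(c*t)-c)^2 else (-(c*t))^2)) := by
          rw [← Fin.sum_univ_eq_sum_range]
          refine Finset.sum_congr rfl fun j _ => ?_
          rw [hqj j]; split_ifs <;> rfl
      _ = (∑ _m ∈ Finset.range k, (c*(1/(k:ℝ))+c*s)^2)
          + ∑ m ∈ Finset.Ico k n, (if m = (i:ℕ) then (-(c*t)-c)^2 else (-(c*t))^2) := by
          rw [aux_sum_range_split n k hkn.le]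
          congr 1
          · exact Finset.sum_congr rfl fun m hm => if_pos (Finset.mem_range.mp hm)
          · exact Finset.sum_congr rfl fun m hm =>
              if_neg (Nat.not_lt.mpr (Finset.mem_Ico.mp hm).1)
      _ = k * (c*(1/(k:ℝ))+c*s)^2
          + (((n:ℝ)-k) * (-(c*t))^2 + ((-(c*t)-c)^2 - (-(c*t))^2)) := by
          have hmem : (i:ℕ) ∈ Finset.Ico k n := Finset.mem_Ico.mpr ⟨hi, i.isLt⟩
          have hrw : ∑ m ∈ Finset.Ico k n, (if m = (i:ℕ) then (-(c*t)-c)^2 else (-(c*t))^2)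
              = ∑ m ∈ Finset.Ico k n, ((-(c*t))^2
                + (if m = (i:ℕ) then (-(c*t)-c)^2 - (-(c*t))^2 else 0)) := by
            refine Finset.sum_congr rfl fun m _ => ?_
            split_ifs <;> ring
          rw [hrw, Finset.sum_add_distrib,
            Finset.sum_ite_eq' (Finset.Ico k n) ((i:ℕ))
              (fun _ => (-(c*t)-c)^2 - (-(c*t))^2), if_pos hmem,
            Finset.sum_const, Finset.sum_const, Nat.card_Ico, Finset.card_range]
          simp only [nsmul_eq_mul, Nat.cast_sub hkn.le]
  -- final algebra
  rw [aux_norm_sq_eq, hsum, ← hc2]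
  have h1 : (k:ℝ) * (1/(k:ℝ)) = 1 := by field_simp
  have h2 : (n:ℝ) * (1/(n:ℝ)) = 1 := by field_simp
  have h3 : ((n:ℝ)-k) * (1/((n:ℝ)-k)) = 1 := by field_simp
  linear_combination ((k:ℝ)-1)*c^2*hs2 + (((n:ℝ)-k)-1)*c^2*ht2 - 2*c^2*hst
    + c^2*h3 - c^2*h2 + (c^2*(1/(k:ℝ)) + 2*c^2*s + c^2)*h1
end

section
/- Let f be a drop kernel profile: there exist C > 0 and z > r > 0 with f(z_1) - f(z_2) > C for all z_1 ∈ (z-r, z), z_2 ∈ (z, z+r). In the construction P = {(z/√2)e_i : i ≤ n} ⊂ ℝ^n, if Q ⊆ P has size k satisfying the interval conditions guaranteeing l_1 ∈ (z-r,z) and l_2 ∈ (z,z+r), and sup_x |kde_P(x) - kde_Q(x)| ≤ ε with kde defined via K(x,y)=f(‖x-y‖), then (1 - k/n)·C ≤ ε, i.e., k ≥ n(1 - ε/C). -/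
private lemma stmt16_b1 (z r kk : ℝ) (hz : 0 < z)
    (hz2k : z ^ 2 ≤ 2 * kk * (2 * z * r - r ^ 2)) :
    (z - r) ^ 2 * (4 * kk) < z ^ 2 * (4 * kk - 1) := by
  nlinarith [hz2k, hz, sq_nonneg z]

private lemma stmt16_b2 (z kk : ℝ) (hz : 0 < z) :
    z ^ 2 * (4 * kk - 1) < z ^ 2 * (4 * kk) := by
  nlinarith [pow_pos hz 2]

private lemma stmt16_b3 (z kk u s : ℝ) (hz : 0 < z) (hu0 : 0 ≤ u) (hs0 : 0 ≤ s) :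
    z ^ 2 * (4 * kk) < z ^ 2 * (4 * kk + 3 + 2 * u * s) := by
  nlinarith [mul_nonneg (mul_nonneg hu0 hs0) (sq_nonneg z), pow_pos hz 2]

private lemma stmt16_b4 (z r kk u s w : ℝ) (hP : 0 < 2 * z * r + r ^ 2)
    (hw2 : w ^ 2 = kk) (hw1 : 1 ≤ w) (hs0 : 0 ≤ s)
    (hsw : s ≤ 2 * w) (huw : u ≤ 3 / 2)
    (hz2w : 4 * z ^ 2 ≤ w * (2 * z * r + r ^ 2)) :
    z ^ 2 * (4 * kk + 3 + 2 * u * s) < (z + r) ^ 2 * (4 * kk) := by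
  have hw0 : 0 < w := lt_of_lt_of_le one_pos hw1
  have hus : u * s ≤ (3 / 2) * (2 * w) := mul_le_mul huw hsw hs0 (by norm_num)
  have h2 : z ^ 2 * 4 ≤ w * (2 * z * r + r ^ 2) := by linarith
  nlinarith [mul_le_mul_of_nonneg_left h2 hw0.le,
    mul_pos (mul_pos hw0 hw0) hP, sq_nonneg w,
    mul_le_mul_of_nonneg_left hus (sq_nonneg z)]

private lemma stmt16_id (z kk : ℝ) (hk0 : 0 < kk) :
    kk * (z * (Real.sqrt 2 + Real.sqrt (1 + 2*kk)) / (2*kk)) ^ 2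
      - 2 * (z * (Real.sqrt 2 + Real.sqrt (1 + 2*kk)) / (2*kk)) * (z / Real.sqrt 2)
      + (z / Real.sqrt 2) ^ 2 = z ^ 2 * (4*kk - 1) / (4*kk) ∧
    kk * (z * (Real.sqrt 2 + Real.sqrt (1 + 2*kk)) / (2*kk)) ^ 2
      + (z / Real.sqrt 2) ^ 2
      = z ^ 2 * (4*kk + 3 + 2 * Real.sqrt 2 * Real.sqrt (1 + 2*kk)) / (4*kk) := by
  set u : ℝ := Real.sqrt 2 with hu
  have hu2 : u ^ 2 = 2 := Real.sq_sqrt (by norm_num)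
  have hu0 : 0 < u := Real.sqrt_pos.mpr (by norm_num)
  set s : ℝ := Real.sqrt (1 + 2*kk) with hs
  have hs2 : s ^ 2 = 1 + 2*kk := Real.sq_sqrt (by positivity)
  set t : ℝ := z * (u + s) / (2*kk) with ht
  have h4k : (4:ℝ) * kk ≠ 0 := by positivity
  have htt : t * (2*kk) = z * (u + s) := by rw [ht]; field_simp
  have hzu : (z * u / 2) ^ 2 = z ^ 2 / 2 := by linear_combination (z ^ 2 / 4) * hu2
  have hd : z / u = z * u / 2 := by
    rw [div_eq_div_iff hu0.ne' (by norm_num : (2:ℝ) ≠ 0)]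
    linear_combination (-z) * hu2
  have ht2 : 4 * kk * (kk * t ^ 2) = z ^ 2 * (3 + 2*u*s + 2*kk) := by
    have h := congrArg (fun y => y ^ 2) htt
    simp only [mul_pow] at h
    linear_combination h + z ^ 2 * hu2 + z ^ 2 * hs2
  have ht1 : 4 * kk * (2 * t * (z * u / 2)) = z ^ 2 * (4 + 2*u*s) := by
    linear_combination (2*z*u) * htt + 2 * z ^ 2 * hu2
  constructor
  · rw [hd]
    apply mul_left_cancel₀ h4k
    have hr4 : 4 * kk * (z ^ 2 * (4*kk - 1) / (4*kk)) = z ^ 2 * (4*kk - 1) := by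
      field_simp
    rw [hr4]
    linear_combination ht2 - ht1 + 4 * kk * hzu
  · rw [hd]
    apply mul_left_cancel₀ h4k
    have hr4 : 4 * kk * (z ^ 2 * (4*kk + 3 + 2*u*s) / (4*kk))
        = z ^ 2 * (4*kk + 3 + 2*u*s) := by
      field_simp
    rw [hr4]
    linear_combination ht2 + 4 * kk * hzu

private lemma stmt16_bounds (z r kk : ℝ) (hr : 0 < r) (hrz : r < z) (hk1 : 1 ≤ kk)
    (hklo1 : z ^ 2 / (2 * (2 * z * r - r ^ 2)) ≤ kk)
    (hklo2 : (4 * z ^ 2 / (2 * z * r + r ^ 2)) ^ 2 ≤ kk) :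
    ((z - r) ^ 2 < z ^ 2 * (4*kk - 1) / (4*kk) ∧ z ^ 2 * (4*kk - 1) / (4*kk) < z ^ 2) ∧
    (z ^ 2 < z ^ 2 * (4*kk + 3 + 2 * Real.sqrt 2 * Real.sqrt (1 + 2*kk)) / (4*kk) ∧
      z ^ 2 * (4*kk + 3 + 2 * Real.sqrt 2 * Real.sqrt (1 + 2*kk)) / (4*kk) < (z + r) ^ 2) := by
  have hz : 0 < z := hr.trans hrz
  have hk0 : (0:ℝ) < kk := lt_of_lt_of_le one_pos hk1
  have hP : 0 < 2 * z * r + r ^ 2 := by nlinarith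
  have hQ : 0 < 2 * (2 * z * r - r ^ 2) := by nlinarith
  have hz2k : z ^ 2 ≤ 2 * kk * (2 * z * r - r ^ 2) := by
    rw [div_le_iff₀ hQ] at hklo1
    nlinarith [hklo1]
  set u : ℝ := Real.sqrt 2 with hu
  have hu2 : u ^ 2 = 2 := Real.sq_sqrt (by norm_num)
  have hu0 : 0 ≤ u := Real.sqrt_nonneg _
  set s : ℝ := Real.sqrt (1 + 2*kk) with hs
  have hs2 : s ^ 2 = 1 + 2*kk := Real.sq_sqrt (by positivity)
  have hs0 : 0 ≤ s := Real.sqrt_nonneg _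
  set w : ℝ := Real.sqrt kk with hw
  have hw2 : w ^ 2 = kk := Real.sq_sqrt hk0.le
  have hw1 : 1 ≤ w := Real.one_le_sqrt.mpr hk1
  have hw0 : (0:ℝ) ≤ w := le_trans zero_le_one hw1
  have hDw : 4 * z ^ 2 / (2 * z * r + r ^ 2) ≤ w := by
    apply le_of_pow_le_pow_left₀ two_ne_zero hw0
    rw [hw2]; exact hklo2
  have hz2w : 4 * z ^ 2 ≤ w * (2 * z * r + r ^ 2) := by
    rw [div_le_iff₀ hP] at hDw; linarith
  have hsw : s ≤ 2 * w := by
    apply le_of_pow_le_pow_left₀ two_ne_zero (by linarith)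
    rw [hs2, mul_pow, hw2]; nlinarith [hk1]
  have huw : u ≤ 3 / 2 := by
    apply le_of_pow_le_pow_left₀ two_ne_zero (by norm_num)
    rw [hu2]; norm_num
  refine ⟨⟨?_, ?_⟩, ?_, ?_⟩
  · rw [lt_div_iff₀ (by positivity)]
    exact stmt16_b1 z r kk hz hz2k
  · rw [div_lt_iff₀ (by positivity)]
    exact stmt16_b2 z kk hz
  · rw [lt_div_iff₀ (by positivity)]
    exact stmt16_b3 z kk u s hz hu0 hs0
  · rw [div_lt_iff₀ (by positivity)]
    exact stmt16_b4 z r kk u s w hP hw2 hw1 hs0 hsw huw hz2w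

theorem stmt16 {n k : ℕ} (z r C ε : ℝ) (hr : 0 < r) (hrz : r < z) (hC : 0 < C)
    (f : ℝ → ℝ)
    (hdrop : ∀ z1 ∈ Set.Ioo (z - r) z, ∀ z2 ∈ Set.Ioo z (z + r), f z1 - f z2 > C)
    (p : Fin n → EuclideanSpace ℝ (Fin n))
    (hp : ∀ i, p i = (z / Real.sqrt 2) • EuclideanSpace.single i (1 : ℝ))
    (hk1 : 1 ≤ k)
    (hkup : (k : ℝ) ≤ min ((n : ℝ) - 1) ((n : ℝ) - (4 * z ^ 2 / (2 * z * r + r ^ 2)) ^ 2))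
    (hklo : (k : ℝ) ≥ max (z ^ 2 / (2 * (2 * z * r - r ^ 2)))
      ((4 * z ^ 2 / (2 * z * r + r ^ 2)) ^ 2))
    (hε : ∀ x : EuclideanSpace ℝ (Fin n),
      |(n : ℝ)⁻¹ * (∑ i, f ‖x - p i‖) -
        (k : ℝ)⁻¹ * ∑ i ∈ Finset.univ.filter (fun i : Fin n => (i : ℕ) < k), f ‖x - p i‖| ≤ ε) :
    (1 - (k : ℝ) / n) * C ≤ ε ∧ (k : ℝ) ≥ (n : ℝ) * (1 - ε / C) := by
  have hz : 0 < z := hr.trans hrz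
  have hk0 : (0 : ℝ) < k := by exact_mod_cast hk1
  have hkR1 : (1 : ℝ) ≤ k := by exact_mod_cast hk1
  have hkne : (k : ℝ) ≠ 0 := ne_of_gt hk0
  have hknR : (k : ℝ) ≤ (n : ℝ) - 1 := le_trans hkup (min_le_left _ _)
  have hn0 : (0 : ℝ) < n := by linarith
  have hnne : (n : ℝ) ≠ 0 := ne_of_gt hn0
  have hkn : k ≤ n := by
    have : (k : ℝ) ≤ (n : ℝ) := by linarith
    exact_mod_cast this
  -- identities and bounds
  have hid := stmt16_id z (k : ℝ) hk0
  have hbd := stmt16_bounds z r (k : ℝ) hr hrz hkR1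
    (le_trans (le_max_left _ _) hklo) (le_trans (le_max_right _ _) hklo)
  set t : ℝ := z * (Real.sqrt 2 + Real.sqrt (1 + 2 * (k : ℝ))) / (2 * (k : ℝ)) with ht
  set A : ℝ := z ^ 2 * (4 * (k : ℝ) - 1) / (4 * (k : ℝ)) with hA
  set B : ℝ := z ^ 2 * (4 * (k : ℝ) + 3
    + 2 * Real.sqrt 2 * Real.sqrt (1 + 2 * (k : ℝ))) / (4 * (k : ℝ)) with hB
  set l1 : ℝ := Real.sqrt A with hl1
  set l2 : ℝ := Real.sqrt B with hl2
  have hl1mem : l1 ∈ Set.Ioo (z - r) z := by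
    constructor
    · rcases le_or_gt 0 (z - r) with h | h
      · exact (Real.lt_sqrt h).mpr hbd.1.1
      · exact lt_of_lt_of_le h (Real.sqrt_nonneg _)
    · exact (Real.sqrt_lt' hz).mpr hbd.1.2
  have hl2mem : l2 ∈ Set.Ioo z (z + r) := by
    constructor
    · exact (Real.lt_sqrt hz.le).mpr hbd.2.1
    · exact (Real.sqrt_lt' (by linarith)).mpr hbd.2.2
  -- the evaluation point
  set x : EuclideanSpace ℝ (Fin n) :=
    WithLp.toLp 2 (fun i => if (i : ℕ) < k then t else 0 : Fin n → ℝ) with hx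
  have hxap : ∀ i : Fin n, x i = if (i : ℕ) < k then t else 0 := fun i => rfl
  have hcard : (Finset.univ.filter (fun i : Fin n => (i : ℕ) < k)).card = k := by
    rw [← Finset.card_range k]
    apply Finset.card_bij (fun (i : Fin n) _ => (i : ℕ))
    · intro a ha; simp at ha ⊢; exact ha
    · intro a _ b _ h; exact Fin.ext h
    · intro a ha; simp at ha; exact ⟨⟨a, lt_of_lt_of_le ha hkn⟩, by simpa, rfl⟩
  -- norm computation
  have hnorm : ∀ j : Fin n, ‖x - p j‖ =
      Real.sqrt ((k : ℝ) * t ^ 2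
        - 2 * t * (z / Real.sqrt 2) * (if (j : ℕ) < k then 1 else 0)
        + (z / Real.sqrt 2) ^ 2) := by
    intro j
    rw [EuclideanSpace.norm_eq]
    congr 1
    have h1 : ∀ i, (x - p j) i =
        (if (i : ℕ) < k then t else 0)
          - (z / Real.sqrt 2) * (if i = j then 1 else 0) := by
      intro i
      simp [hxap, hp, EuclideanSpace.single_apply, PiLp.smul_apply, smul_eq_mul]
    have key : ∀ i : Fin n, ‖(x - p j) i‖ ^ 2 =
        (if (i : ℕ) < k then t ^ 2 else 0)
        - (if i = j then
            2 * t * (z / Real.sqrt 2) * (if (j : ℕ) < k then 1 else 0) else 0)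
        + (if i = j then (z / Real.sqrt 2) ^ 2 else 0) := by
      intro i
      rw [Real.norm_eq_abs, sq_abs, h1]
      by_cases h2 : i = j
      · subst h2; by_cases h3 : (i : ℕ) < k <;> simp [h3] <;> try ring
      · simp [h2]
    rw [Finset.sum_congr rfl (fun i _ => key i), Finset.sum_add_distrib,
      Finset.sum_sub_distrib, ← Finset.sum_filter, Finset.sum_const, hcard,
      Finset.sum_ite_eq', Finset.sum_ite_eq']
    simp [mul_comm]
  have hnorm1 : ∀ j : Fin n, (j : ℕ) < k → ‖x - p j‖ = l1 := by
    intro j hj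
    rw [hnorm j, if_pos hj, mul_one, hl1, ← hid.1]
  have hnorm2 : ∀ j : Fin n, ¬ (j : ℕ) < k → ‖x - p j‖ = l2 := by
    intro j hj
    rw [hnorm j, if_neg hj, mul_zero, sub_zero, hl2, ← hid.2]
  -- the kde sums
  have hsum1 : ∑ i ∈ Finset.univ.filter (fun i : Fin n => (i : ℕ) < k), f ‖x - p i‖
      = (k : ℝ) * f l1 := by
    rw [Finset.sum_congr rfl (fun i hi => by
      rw [hnorm1 i (by simpa using (Finset.mem_filter.mp hi).2)]),
      Finset.sum_const, hcard, nsmul_eq_mul]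
  have hcard2 : (Finset.univ.filter (fun i : Fin n => ¬ (i : ℕ) < k)).card = n - k := by
    have := Finset.card_filter_add_card_filter_not
      (s := (Finset.univ : Finset (Fin n))) (p := fun i : Fin n => (i : ℕ) < k)
    simp only [Finset.card_univ, Fintype.card_fin] at this
    omega
  have hsum2 : ∑ i : Fin n, f ‖x - p i‖ = (k : ℝ) * f l1 + ((n : ℝ) - k) * f l2 := by
    rw [← Finset.sum_filter_add_sum_filter_not Finset.univ (fun i : Fin n => (i : ℕ) < k),
      hsum1]
    congr 1
    rw [Finset.sum_congr rfl (fun i hi => by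
      rw [hnorm2 i (by simpa using (Finset.mem_filter.mp hi).2)]),
      Finset.sum_const, hcard2, nsmul_eq_mul]
    rw [Nat.cast_sub hkn]
  -- apply the hypothesis at x
  have hab : f l1 - f l2 > C := hdrop l1 hl1mem l2 hl2mem
  have hεx := hε x
  rw [hsum2, hsum1] at hεx
  have hexpr : (n : ℝ)⁻¹ * ((k : ℝ) * f l1 + ((n : ℝ) - k) * f l2)
      - (k : ℝ)⁻¹ * ((k : ℝ) * f l1) = -((1 - (k : ℝ) / n) * (f l1 - f l2)) := by
    field_simp
    ring
  rw [hexpr, abs_neg] at hεx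
  have hpos : 0 < 1 - (k : ℝ) / n := by
    rw [sub_pos, div_lt_one hn0]; linarith
  have hmain : (1 - (k : ℝ) / n) * C ≤ ε := by
    have h1 : (1 - (k : ℝ) / n) * C ≤ (1 - (k : ℝ) / n) * (f l1 - f l2) :=
      mul_le_mul_of_nonneg_left (le_of_lt hab) hpos.le
    have h2 : (1 - (k : ℝ) / n) * (f l1 - f l2) ≤ ε := by
      have := le_abs_self ((1 - (k : ℝ) / n) * (f l1 - f l2))
      linarith
    linarith
  refine ⟨hmain, ?_⟩
  have h1 : 1 - (k : ℝ) / n ≤ ε / C := by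
    rw [le_div_iff₀ hC]; linarith
  have h3 := mul_le_mul_of_nonneg_right h1 hn0.le
  have h4 : (1 - (k : ℝ) / n) * n = n - k := by field_simp
  rw [h4] at h3
  have h5 : (n : ℝ) * (1 - ε / C) = n - ε / C * n := by ring
  rw [ge_iff_le, h5]
  linarith
end

section
/- Let z > r > 0, and let n > k ≥ 1 with k ≥ (4z²/(2zr + r²))² and n - k ≥ (4z²/(2zr + r²))². Then l_2 defined by l_2² = (z²/2)(1 + √(1/k - 1/n) + √(1/(n-k) - 1/n))² + (z²/2)(1 - 1/(n-k)) satisfies z < l_2 < z + r. -/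
set_option maxHeartbeats 800000 in
theorem stmt18 {n k : ℕ} (z r : ℝ) (hr : 0 < r) (hrz : r < z)
    (hk1 : 1 ≤ k) (hkn : k < n)
    (hklo : (k : ℝ) ≥ (4 * z ^ 2 / (2 * z * r + r ^ 2)) ^ 2)
    (hnk : (n : ℝ) - k ≥ (4 * z ^ 2 / (2 * z * r + r ^ 2)) ^ 2)
    (l2 : ℝ) (hl2pos : 0 ≤ l2)
    (hl2 : l2 ^ 2 =
      (z ^ 2 / 2) *
          (1 + Real.sqrt (1 / k - 1 / n) + Real.sqrt (1 / ((n : ℝ) - k) - 1 / n)) ^ 2 +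
        (z ^ 2 / 2) * (1 - 1 / ((n : ℝ) - k))) :
    z < l2 ∧ l2 < z + r := by
  have hz : 0 < z := hr.trans hrz
  have hz2 : 0 < z ^ 2 := by positivity
  set s : ℝ := 2 * z * r + r ^ 2 with hs_def
  have hs0 : 0 < s := by positivity
  have hs3 : s < 3 * z ^ 2 := by
    have h1 : r * r < z * z := mul_lt_mul'' hrz hrz hr.le hr.le
    have h2 : z * r < z * z := mul_lt_mul_of_pos_left hrz hz
    have : s = 2 * (z * r) + r * r := by rw [hs_def]; ring
    have hzz : z * z = z ^ 2 := by ring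
    rw [this]; rw [hzz] at h1 h2; linarith
  have hkR : (0:ℝ) < k := by exact_mod_cast Nat.lt_of_lt_of_le Nat.zero_lt_one hk1
  have hk1R : (1:ℝ) ≤ k := by exact_mod_cast hk1
  have hknR : (k:ℝ) < n := by exact_mod_cast hkn
  have hnR : (0:ℝ) < n := hkR.trans hknR
  have hnkR : (0:ℝ) < (n:ℝ) - k := by linarith
  set a : ℝ := Real.sqrt (1 / k - 1 / n) with ha_def
  set b : ℝ := Real.sqrt (1 / ((n : ℝ) - k) - 1 / n) with hb_def
  have ha0 : 0 ≤ a := Real.sqrt_nonneg _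
  have hb0 : 0 ≤ b := Real.sqrt_nonneg _
  have ha2 : a ^ 2 = 1 / (k:ℝ) - 1 / n := by
    rw [ha_def, Real.sq_sqrt]
    have := one_div_le_one_div_of_le hkR hknR.le
    linarith
  have hb2 : b ^ 2 = 1 / ((n:ℝ) - k) - 1 / n := by
    rw [hb_def, Real.sq_sqrt]
    have h : (n:ℝ) - k ≤ n := by linarith
    have := one_div_le_one_div_of_le hnkR h
    linarith
  -- identity
  have hb2' : 1 / ((n:ℝ) - k) = b ^ 2 + 1 / n := by rw [hb2]; ring
  have hid : l2 ^ 2 = z ^ 2 + z ^ 2 * a + z ^ 2 * b + z ^ 2 * (a * b)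
      + z ^ 2 * a ^ 2 / 2 - z ^ 2 / (2 * (n:ℝ)) := by
    rw [hl2, hb2']; ring
  -- lower bound
  have key : 1 / (4 * (n:ℝ) ^ 2) < 1 / ((n:ℝ) - k) - 1 / n := by
    rw [div_sub_div _ _ hnkR.ne' hnR.ne', div_lt_div_iff₀ (by positivity) (by positivity)]
    have e1 : 0 ≤ ((k:ℝ) - 1) * (n:ℝ) ^ 2 :=
      mul_nonneg (by linarith) (sq_nonneg _)
    have e2 : 0 < (n:ℝ) * n := mul_pos hnR hnR
    have e3 : 0 < (k:ℝ) * n := mul_pos hkR hnR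
    linarith [e1, e2, e3]
  have hblb : 1 / (2 * (n:ℝ)) < b := by
    have hsq : (1 / (2 * (n:ℝ))) ^ 2 < b ^ 2 := by
      rw [hb2]
      have h : (1 / (2 * (n:ℝ))) ^ 2 = 1 / (4 * (n:ℝ) ^ 2) := by
        rw [div_pow, one_pow, mul_pow]; norm_num
      rw [h]; exact key
    exact lt_of_pow_lt_pow_left₀ 2 hb0 hsq
  have hlow : z ^ 2 < l2 ^ 2 := by
    rw [hid]
    have h1 : z ^ 2 * (1 / (2 * (n:ℝ))) < z ^ 2 * b :=
      mul_lt_mul_of_pos_left hblb hz2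
    have h2 : z ^ 2 / (2 * (n:ℝ)) = z ^ 2 * (1 / (2 * (n:ℝ))) := by ring
    rw [h2]
    linarith [mul_nonneg hz2.le ha0, mul_nonneg hz2.le (mul_nonneg ha0 hb0),
      mul_nonneg hz2.le (sq_nonneg a)]
  -- upper bound
  have hks : (4 * z ^ 2) ^ 2 ≤ (k:ℝ) * s ^ 2 := by
    rw [div_pow] at hklo
    exact (div_le_iff₀ (by positivity)).mp hklo
  have hnks : (4 * z ^ 2) ^ 2 ≤ ((n:ℝ) - k) * s ^ 2 := by
    rw [div_pow] at hnk
    exact (div_le_iff₀ (by positivity)).mp hnk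
  have hka : (k:ℝ) * a ^ 2 ≤ 1 := by
    rw [ha2, mul_sub, mul_one_div_cancel hkR.ne']
    have : 0 ≤ (k:ℝ) * (1 / n) := by positivity
    linarith
  have hnkb : ((n:ℝ) - k) * b ^ 2 ≤ 1 := by
    rw [hb2, mul_sub, mul_one_div_cancel hnkR.ne']
    have : 0 ≤ ((n:ℝ) - k) * (1 / n) := by positivity
    linarith
  have haq : (4 * z ^ 2 * a) ^ 2 ≤ s ^ 2 := by
    have t1 : 0 ≤ a ^ 2 * ((k:ℝ) * s ^ 2 - (4 * z ^ 2) ^ 2) :=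
      mul_nonneg (sq_nonneg a) (by linarith)
    have t2 : 0 ≤ s ^ 2 * (1 - (k:ℝ) * a ^ 2) :=
      mul_nonneg (sq_nonneg s) (by linarith)
    linarith [t1, t2]
  have hbq : (4 * z ^ 2 * b) ^ 2 ≤ s ^ 2 := by
    have t1 : 0 ≤ b ^ 2 * (((n:ℝ) - k) * s ^ 2 - (4 * z ^ 2) ^ 2) :=
      mul_nonneg (sq_nonneg b) (by linarith)
    have t2 : 0 ≤ s ^ 2 * (1 - ((n:ℝ) - k) * b ^ 2) :=
      mul_nonneg (sq_nonneg s) (by linarith)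
    linarith [t1, t2]
  have ha4 : 4 * z ^ 2 * a ≤ s := le_of_pow_le_pow_left₀ two_ne_zero hs0.le haq
  have hb4 : 4 * z ^ 2 * b ≤ s := le_of_pow_le_pow_left₀ two_ne_zero hs0.le hbq
  have hab : 16 * z ^ 4 * (a * b) ≤ s ^ 2 := by
    have := mul_le_mul ha4 hb4 (by positivity) hs0.le
    linarith [this]
  have hss : s * s < 3 * z ^ 2 * s := mul_lt_mul_of_pos_right hs3 hs0
  have h3 : z ^ 2 * (a * b) ≤ 3 * s / 16 := by
    rw [show (3:ℝ) * s / 16 = (3 * z ^ 2 * s) / (16 * z ^ 2) by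
      field_simp]
    rw [le_div_iff₀ (by positivity)]
    linarith [hab, hss]
  have h4 : z ^ 2 * a ^ 2 ≤ 3 * s / 16 := by
    rw [show (3:ℝ) * s / 16 = (3 * z ^ 2 * s) / (16 * z ^ 2) by
      field_simp]
    rw [le_div_iff₀ (by positivity)]
    linarith [haq, hss]
  have hpos : 0 < z ^ 2 / (2 * (n:ℝ)) := by positivity
  have hup : l2 ^ 2 < (z + r) ^ 2 := by
    rw [hid, show (z + r) ^ 2 = z ^ 2 + s by rw [hs_def]; ring]
    linarith [ha4, hb4, h3, h4, hs0, hpos]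
  exact ⟨lt_of_pow_lt_pow_left₀ 2 hl2pos hlow, lt_of_pow_lt_pow_left₀ 2 (by positivity) hup⟩
end
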